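/- Let g be an analytic function on the unit disc U that extends continuously to the closed unit disc, and suppose the boundary function t ↦ g(e^{it}) is absolutely continuous on [0,2π] with derivative g_b' ∈ L^1[0,2π]. Then for every w ∈ U, i w g'(w) equals the Poisson integral of g_b' evaluated at w, i.e., i w g'(w) = (1/2π) ∫_0^{2π} ((1-|w|²)/|e^{it} - w|²) g_b'(t) dt. -/

import Mathlib

open Set MeasureTheory Filter Topology Metric Complex intervalIntegral

noncomputable section

lemma ibp_key {a b : ℝ} (hab : a ≤ b) (f u' : ℝ → ℂ)
    (hf : IntervalIntegrable f volume a b) (hu' : Continuous u') :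
    ∫ t in a..b, (∫ s in a..t, u' s) * f t
      = ∫ s in a..b, u' s * (∫ t in s..b, f t) := by
  have hfint : IntegrableOn f (Ioc a b) volume := hf.1
  have hu'int : IntegrableOn u' (Ioc a b) volume := hu'.integrableOn_Ioc
  set S : Set (ℝ × ℝ) := {p : ℝ × ℝ | a < p.2 ∧ p.2 ≤ p.1} with hS
  have hSm : MeasurableSet S :=
    (measurableSet_lt measurable_const measurable_snd).inter
      (measurableSet_le measurable_snd measurable_fst)
  have hbase : Integrable (fun p : ℝ × ℝ => f p.1 * u' p.2)
      ((volume.restrict (Ioc a b)).prod (volume.restrict (Ioc a b))) :=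
    Integrable.mul_prod hfint hu'int
  have hΦ : Integrable
      (Function.uncurry fun t s => (Ioc a t).indicator u' s * f t)
      ((volume.restrict (Ioc a b)).prod (volume.restrict (Ioc a b))) := by
    have heq : (Function.uncurry fun t s => (Ioc a t).indicator u' s * f t)
        = S.indicator (fun p : ℝ × ℝ => f p.1 * u' p.2) := by
      funext p
      by_cases h : p.2 ∈ Ioc a p.1
      · have hp : p ∈ S := ⟨h.1, h.2⟩
        simp [Function.uncurry, Set.indicator_of_mem h, Set.indicator_of_mem hp, mul_comm]
      · have hp : p ∉ S := fun hp => h ⟨hp.1, hp.2⟩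
        simp [Function.uncurry, Set.indicator_of_notMem h, Set.indicator_of_notMem hp]
    rw [heq]
    exact hbase.indicator hSm
  have swap := integral_integral_swap hΦ
  calc ∫ t in a..b, (∫ s in a..t, u' s) * f t
      = ∫ t in Ioc a b, (∫ s in Ioc a b, (Ioc a t).indicator u' s) * f t := by
        rw [integral_of_le hab]
        refine setIntegral_congr_fun measurableSet_Ioc (fun t ht => ?_)
        rw [setIntegral_indicator measurableSet_Ioc, integral_of_le ht.1.le]
        congr 1
        rw [Set.Ioc_inter_Ioc, max_self, min_eq_right ht.2]
    _ = ∫ t in Ioc a b, ∫ s in Ioc a b, (Ioc a t).indicator u' s * f t := by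
        refine setIntegral_congr_fun measurableSet_Ioc (fun t _ => ?_)
        exact (MeasureTheory.integral_mul_const (f t) _).symm
    _ = ∫ s in Ioc a b, ∫ t in Ioc a b, (Ioc a t).indicator u' s * f t := swap
    _ = ∫ s in a..b, u' s * (∫ t in s..b, f t) := by
        rw [integral_of_le hab]
        refine setIntegral_congr_fun measurableSet_Ioc (fun s hs => ?_)
        have h1 : ∀ t : ℝ, (Ioc a t).indicator u' s * f t
            = (Ici s).indicator (fun t => u' s * f t) t := by
          intro t
          by_cases h : s ≤ t
          · simp [Set.indicator_apply, mem_Ioc, mem_Ici, h, hs.1]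
          · simp [Set.indicator_apply, mem_Ioc, mem_Ici, h]
        simp_rw [h1]
        rw [setIntegral_indicator measurableSet_Ici]
        have h2 : Ioc a b ∩ Ici s = Icc s b := by
          ext x
          simp only [mem_inter_iff, mem_Ioc, mem_Icc, mem_Ici]
          constructor
          · rintro ⟨⟨_, hxb⟩, hsx⟩; exact ⟨hsx, hxb⟩
          · rintro ⟨hsx, hxb⟩; exact ⟨⟨lt_of_lt_of_le hs.1 hsx, hxb⟩, hsx⟩
        rw [h2, integral_Icc_eq_integral_Ioc, ← integral_of_le hs.2, intervalIntegral.integral_const_mul]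

lemma ibp_indefinite {a b : ℝ} (hab : a ≤ b) (f u u' : ℝ → ℂ) (c : ℂ)
    (hf : IntervalIntegrable f volume a b)
    (hu : ∀ t, HasDerivAt u (u' t) t) (hu' : Continuous u') :
    ∫ t in a..b, u t * f t
      = u b * (c + ∫ s in a..b, f s) - u a * c
        - ∫ t in a..b, u' t * (c + ∫ s in a..t, f s) := by
  have hucont : Continuous u := by
    rw [continuous_iff_continuousAt]; exact fun t => (hu t).continuousAt
  have hfund : ∀ t : ℝ, ∫ s in a..t, u' s = u t - u a := fun t =>
    integral_eq_sub_of_hasDerivAt (fun s _ => hu s) (hu'.intervalIntegrable _ _)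
  have hFcont : ContinuousOn (fun s => ∫ x in a..s, f x) (uIcc a b) :=
    continuousOn_primitive_interval' hf left_mem_uIcc
  have h2 : IntervalIntegrable (fun t => (u t - u a) * f t) volume a b :=
    hf.continuousOn_mul ((hucont.sub continuous_const).continuousOn)
  have h1 : IntervalIntegrable (fun t => u a * f t) volume a b := hf.const_mul _
  have key := ibp_key hab f u' hf hu'
  simp_rw [hfund] at key
  have split : ∫ t in a..b, u t * f t
      = u a * (∫ t in a..b, f t) + ∫ t in a..b, (u t - u a) * f t := by
    rw [← intervalIntegral.integral_const_mul, ← integral_add h1 h2]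
    exact integral_congr (fun t _ => by ring)
  rw [split, key]
  have hsub : ∀ s ∈ (uIcc a b), u' s * (∫ t in s..b, f t)
      = u' s * ((c + ∫ x in a..b, f x) - (c + ∫ x in a..s, f x)) := by
    intro s hs
    rw [uIcc_of_le hab] at hs
    have hias : IntervalIntegrable f volume a s :=
      hf.mono_set (by rw [uIcc_of_le hab, uIcc_of_le hs.1]; exact Icc_subset_Icc le_rfl hs.2)
    rw [← integral_interval_sub_left hf hias]
    ring
  rw [integral_congr hsub]
  have hint2 : IntervalIntegrable (fun s => u' s * (c + ∫ x in a..s, f x)) volume a b :=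
    ((hu'.continuousOn).mul (continuousOn_const.add hFcont)).intervalIntegrable
  have hint1 : IntervalIntegrable (fun s => u' s * (c + ∫ x in a..b, f x)) volume a b :=
    (hu'.intervalIntegrable _ _).mul_const _
  have : ∫ s in a..b, u' s * ((c + ∫ x in a..b, f x) - (c + ∫ x in a..s, f x))
      = ∫ s in a..b, (u' s * (c + ∫ x in a..b, f x) - u' s * (c + ∫ x in a..s, f x)) :=
    integral_congr (fun s _ => by ring)
  rw [this, integral_sub hint1 hint2, intervalIntegral.integral_mul_const, hfund b]
  ring

lemma norm_exp_I_mul (t : ℝ) : ‖Complex.exp (Complex.I * t)‖ = 1 := by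
  rw [mul_comm]
  exact Complex.norm_exp_ofReal_mul_I t

lemma kernel_split {w : ℂ} (hw : ‖w‖ < 1) (t : ℝ) :
    (((1 - ‖w‖ ^ 2) / ‖Complex.exp (Complex.I * t) - w‖ ^ 2 : ℝ) : ℂ)
      = Complex.exp (Complex.I * t) / (Complex.exp (Complex.I * t) - w)
        + 1 / (1 - (starRingEnd ℂ) w * Complex.exp (Complex.I * t)) - 1 := by
  set z := Complex.exp (Complex.I * t) with hzdef
  have hnorm : ‖z‖ = 1 := norm_exp_I_mul t
  have hz0 : z ≠ 0 := Complex.exp_ne_zero _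
  have hz1 : z - w ≠ 0 := by
    intro h
    rw [sub_eq_zero] at h
    rw [← h, hnorm] at hw
    exact lt_irrefl 1 hw
  have hz2 : 1 - (starRingEnd ℂ) w * z ≠ 0 := by
    intro h
    rw [sub_eq_zero] at h
    have h3 : (1:ℝ) = ‖w‖ := by
      calc (1:ℝ) = ‖(1:ℂ)‖ := by simp
      _ = ‖(starRingEnd ℂ) w * z‖ := by rw [← h]
      _ = ‖w‖ := by rw [norm_mul, hnorm, mul_one, RCLike.norm_conj]
    linarith
  have hzc : z * (starRingEnd ℂ) z = 1 := by
    rw [Complex.mul_conj]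
    norm_cast
    rw [Complex.normSq_eq_norm_sq, hnorm, one_pow]
  have hcz : (starRingEnd ℂ) z = z⁻¹ := eq_inv_of_mul_eq_one_right hzc
  have huniv : ∀ v : ℂ, ((‖v‖ ^ 2 : ℝ) : ℂ) = v * (starRingEnd ℂ) v := by
    intro v
    rw [Complex.mul_conj]
    norm_cast
    rw [Complex.normSq_eq_norm_sq]
  have h1 : ((‖z - w‖ ^ 2 : ℝ) : ℂ) = (z - w) * (1 - (starRingEnd ℂ) w * z) / z := by
    rw [huniv (z - w), map_sub, hcz]
    field_simp
    all_goals (left; ring)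
  rw [Complex.ofReal_div, Complex.ofReal_sub, Complex.ofReal_one, h1, huniv w,
    div_div_eq_mul_div, div_eq_iff (mul_ne_zero hz1 hz2)]
  field_simp
  ring

lemma cauchy_deriv (g : ℂ → ℂ) (hg : DifferentiableOn ℂ g (ball 0 1))
    (hgc : ContinuousOn g (closedBall 0 1)) {w : ℂ} (hw : w ∈ ball (0:ℂ) 1) :
    (∮ z in C(0, 1), ((z - w) ^ 2)⁻¹ * g z) = (2 * Real.pi * Complex.I) * deriv g w := by
  have hw1 : ‖w‖ < 1 := by simpa using hw
  have hdiff : DifferentiableOn ℂ (dslope g w) (ball 0 1) :=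
    (differentiableOn_dslope (isOpen_ball.mem_nhds hw)).mpr hg
  have hcont : ContinuousOn (dslope g w) (closedBall 0 1) := by
    intro z hz
    by_cases hzw : z = w
    · subst hzw
      exact (continuousAt_dslope_same.2
        (hg.differentiableAt (isOpen_ball.mem_nhds hw))).continuousWithinAt
    · have hbase : ContinuousWithinAt (fun z => (z - w)⁻¹ • (g z - g w)) (closedBall 0 1) z :=
        (((continuousWithinAt_id.sub continuousWithinAt_const).inv₀
          (sub_ne_zero.2 hzw))).smul ((hgc z hz).sub continuousWithinAt_const)
      refine hbase.congr_of_eventuallyEq ?_ ?_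
      · filter_upwards [mem_nhdsWithin_of_mem_nhds
          (isOpen_compl_singleton.mem_nhds (by simpa using hzw))] with y hy
        rw [dslope_of_ne g (by simpa using hy)]
        rfl
      · rw [dslope_of_ne g hzw]; rfl
  have hdc : DiffContOnCl ℂ (dslope g w) (ball 0 1) :=
    ⟨hdiff, by rwa [closure_ball (0:ℂ) one_ne_zero]⟩
  have key := hdc.circleIntegral_sub_inv_smul hw
  rw [dslope_same] at key
  have hne : ∀ z ∈ sphere (0:ℂ) 1, z - w ≠ 0 := by
    intro z hz h
    rw [sub_eq_zero] at h
    rw [mem_sphere_zero_iff_norm] at hz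
    rw [← h, hz] at hw1
    exact lt_irrefl 1 hw1
  have heq : EqOn (fun z => (z - w)⁻¹ • dslope g w z)
      (fun z => ((z - w) ^ 2)⁻¹ * g z - ((z - w) ^ 2)⁻¹ * g w) (sphere (0:ℂ) 1) := by
    intro z hz
    have h1 : z ≠ w := fun h => hne z hz (by rw [h, sub_self])
    simp only [dslope_of_ne g h1, slope_def_field, smul_eq_mul]
    have h2 : z - w ≠ 0 := sub_ne_zero.2 h1
    field_simp
    all_goals (left; ring)
  rw [circleIntegral.integral_congr zero_le_one heq] at key
  have hgint : CircleIntegrable (fun z => ((z - w) ^ 2)⁻¹ * g z) 0 1 := by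
    apply ContinuousOn.circleIntegrable zero_le_one
    exact (((continuousOn_id.sub continuousOn_const).pow 2).inv₀
      (fun z hz => pow_ne_zero 2 (hne z hz))).mul (hgc.mono sphere_subset_closedBall)
  have hcint : CircleIntegrable (fun z => ((z - w) ^ 2)⁻¹ * g w) 0 1 := by
    apply ContinuousOn.circleIntegrable zero_le_one
    exact (((continuousOn_id.sub continuousOn_const).pow 2).inv₀
      (fun z hz => pow_ne_zero 2 (hne z hz))).mul continuousOn_const
  rw [circleIntegral.integral_sub hgint hcint] at key
  have hzero : (∮ z in C(0, 1), ((z - w) ^ 2)⁻¹ * g w) = 0 := by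
    have h1 : (∮ z in C(0, 1), ((z - w) ^ 2)⁻¹ * g w)
        = (∮ z in C(0, 1), (z - w) ^ (-2 : ℤ) • g w) := by
      apply circleIntegral.integral_congr zero_le_one
      intro z _
      simp
    rw [h1, circleIntegral.integral_smul_const,
      circleIntegral.integral_sub_zpow_of_ne (by decide) 0 w 1, zero_smul]
  rw [hzero, sub_zero] at key
  rw [key]
  simp [smul_eq_mul]

lemma goursat_term (g : ℂ → ℂ) (hg : DifferentiableOn ℂ g (ball 0 1))
    (hgc : ContinuousOn g (closedBall 0 1)) {w : ℂ} (hw1 : ‖w‖ < 1) :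
    (∮ z in C(0, 1), ((1 - (starRingEnd ℂ) w * z) ^ 2)⁻¹ * g z) = 0 := by
  have hne : ∀ z ∈ closedBall (0:ℂ) 1, 1 - (starRingEnd ℂ) w * z ≠ 0 := by
    intro z hz h
    rw [sub_eq_zero] at h
    have h1 : ‖z‖ ≤ 1 := mem_closedBall_zero_iff.1 hz
    have h2 : (1:ℝ) = ‖w‖ * ‖z‖ := by
      calc (1:ℝ) = ‖(1:ℂ)‖ := by simp
      _ = ‖(starRingEnd ℂ) w * z‖ := by rw [← h]
      _ = ‖w‖ * ‖z‖ := by rw [norm_mul, RCLike.norm_conj]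
    nlinarith [norm_nonneg z, norm_nonneg w]
  apply Complex.circleIntegral_eq_zero_of_differentiable_on_off_countable zero_le_one
    countable_empty
  · exact (((continuousOn_const.sub (continuousOn_const.mul continuousOn_id)).pow 2).inv₀
      (fun z hz => pow_ne_zero 2 (hne z hz))).mul hgc
  · intro z hz
    have hz' : z ∈ ball (0:ℂ) 1 := hz.1
    have hd1 : DifferentiableAt ℂ (fun z => ((1 - (starRingEnd ℂ) w * z) ^ 2)⁻¹) z := by
      apply DifferentiableAt.inv
      · exact ((differentiableAt_const _).sub
          ((differentiableAt_const _).mul differentiableAt_id)).pow 2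
      · exact pow_ne_zero 2 (hne z (ball_subset_closedBall hz'))
    exact hd1.mul (hg.differentiableAt (isOpen_ball.mem_nhds hz'))

/-- Let `g` be analytic on the unit disc and continuous on the closed unit disc, and suppose
the boundary function `t ↦ g(e^{it})` is absolutely continuous on `[0,2π]` (i.e. it is an
indefinite integral of some `g_b' ∈ L¹[0,2π]`).  Then for every `w ∈ U`,
`i w g'(w) = P[g_b'](w)`, the Poisson integral of `g_b'` at `w`. -/
theorem deriv_eq_poisson_integral_of_boundary_deriv
    (g : ℂ → ℂ) (hg : DifferentiableOn ℂ g (Metric.ball 0 1))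
    (hgc : ContinuousOn g (Metric.closedBall 0 1))
    (gb' : ℝ → ℂ)
    (hint : IntervalIntegrable gb' MeasureTheory.volume 0 (2 * Real.pi))
    (hac : ∀ t ∈ Set.Icc (0:ℝ) (2 * Real.pi),
      g (Complex.exp (Complex.I * t)) =
        g (Complex.exp (Complex.I * (0:ℝ))) + ∫ s in (0:ℝ)..t, gb' s)
    (w : ℂ) (hw : w ∈ Metric.ball (0:ℂ) 1) :
    Complex.I * w * deriv g w =
      (1 / (2 * Real.pi)) •
        ∫ t in (0:ℝ)..(2 * Real.pi),
          (((1 - ‖w‖ ^ 2) / ‖Complex.exp (Complex.I * t) - w‖ ^ 2 : ℝ) : ℂ) * gb' t := by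
  have hw1 : ‖w‖ < 1 := by simpa using hw
  have pi_pos := Real.pi_pos
  have h2pi : (0:ℝ) ≤ 2 * Real.pi := by linarith
  set e : ℝ → ℂ := fun t => Complex.exp (Complex.I * t) with he_def
  have hecont : Continuous e :=
    Complex.continuous_exp.comp (continuous_const.mul Complex.continuous_ofReal)
  have hz1 : ∀ t : ℝ, e t - w ≠ 0 := by
    intro t h
    rw [sub_eq_zero] at h
    rw [← h, norm_exp_I_mul t] at hw1
    exact lt_irrefl _ hw1
  have hz2 : ∀ t : ℝ, 1 - (starRingEnd ℂ) w * e t ≠ 0 := by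
    intro t h
    rw [sub_eq_zero] at h
    have h3 : (1:ℝ) = ‖w‖ := by
      calc (1:ℝ) = ‖(1:ℂ)‖ := by simp
      _ = ‖(starRingEnd ℂ) w * e t‖ := by rw [← h]
      _ = ‖w‖ := by rw [norm_mul, norm_exp_I_mul, mul_one, RCLike.norm_conj]
    linarith
  have he : ∀ t : ℝ, HasDerivAt e (Complex.I * e t) t := by
    intro t
    have h : HasDerivAt (fun z : ℂ => Complex.exp (Complex.I * z))
        (Complex.I * Complex.exp (Complex.I * (t:ℂ))) (t:ℂ) := by
      have h0 := ((hasDerivAt_id (t:ℂ)).const_mul Complex.I).cexp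
      simp only [id_eq, mul_one] at h0
      refine h0.congr_deriv ?_
      ring
    exact h.comp_ofReal
  -- the two analytic kernels and their derivatives
  set A : ℝ → ℂ := fun t => e t / (e t - w) with hA_def
  set A' : ℝ → ℂ := fun t => -(Complex.I * w * e t) / (e t - w) ^ 2 with hA'_def
  set B : ℝ → ℂ := fun t => 1 / (1 - (starRingEnd ℂ) w * e t) with hB_def
  set B' : ℝ → ℂ := fun t =>
    Complex.I * (starRingEnd ℂ) w * e t / (1 - (starRingEnd ℂ) w * e t) ^ 2 with hB'_def
  have hA : ∀ t, HasDerivAt A (A' t) t := by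
    intro t
    have h := (he t).div ((he t).sub_const w) (hz1 t)
    refine h.congr_deriv ?_
    simp only [hA'_def]
    ring
  have hB : ∀ t, HasDerivAt B (B' t) t := by
    intro t
    have h := (hasDerivAt_const t (1:ℂ)).div
      (((he t).const_mul ((starRingEnd ℂ) w)).const_sub 1) (hz2 t)
    refine h.congr_deriv ?_
    simp only [hB'_def]
    ring
  have hAc : Continuous A := hecont.div (hecont.sub continuous_const) hz1
  have hBc : Continuous B :=
    continuous_const.div (continuous_const.sub (continuous_const.mul hecont)) hz2
  have hA'c : Continuous A' :=
    ((continuous_const.mul hecont).neg).div ((hecont.sub continuous_const).pow 2)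
      (fun t => pow_ne_zero 2 (hz1 t))
  have hB'c : Continuous B' :=
    (continuous_const.mul hecont).div ((continuous_const.sub
      (continuous_const.mul hecont)).pow 2) (fun t => pow_ne_zero 2 (hz2 t))
  -- periodicity
  have hper : e (2 * Real.pi) = e 0 := by
    simp only [he_def]
    have h1 : Complex.I * ((2 * Real.pi : ℝ) : ℂ) = 2 * Real.pi * Complex.I := by
      push_cast; ring
    rw [h1, Complex.exp_two_pi_mul_I]
    simp
  have hint0 : ∫ s in (0:ℝ)..(2 * Real.pi), gb' s = 0 := by
    have h := hac (2 * Real.pi) ⟨h2pi, le_refl _⟩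
    rw [show Complex.exp (Complex.I * ((2 * Real.pi : ℝ) : ℂ)) = e (2 * Real.pi) from rfl,
      show Complex.exp (Complex.I * ((0:ℝ) : ℂ)) = e 0 from rfl, hper] at h
    exact left_eq_add.1 h
  -- circle integral representation
  have hcm : ∀ θ : ℝ, circleMap 0 1 θ = e θ := by
    intro θ
    have h1 : (θ:ℂ) * Complex.I = Complex.I * (θ:ℂ) := mul_comm _ _
    simp [circleMap, he_def, h1]
  have hrep : ∀ h : ℂ → ℂ, (∮ z in C(0, 1), h z)
      = ∫ θ in (0:ℝ)..(2 * Real.pi), (e θ * Complex.I) * h (e θ) := by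
    intro h
    rw [circleIntegral]
    apply integral_congr
    intro θ _
    simp only [deriv_circleMap, smul_eq_mul, hcm]
  -- IBP for A
  have ibpA := ibp_indefinite h2pi gb' A A' (g (e 0)) hint hA hA'c
  rw [hint0, add_zero, show A (2 * Real.pi) = A 0 by simp only [hA_def, hper],
    sub_self, zero_sub] at ibpA
  have hcongrA : ∀ t ∈ uIcc (0:ℝ) (2 * Real.pi),
      A' t * (g (e 0) + ∫ s in (0:ℝ)..t, gb' s) = A' t * g (e t) := by
    intro t ht
    rw [uIcc_of_le h2pi] at ht
    rw [← hac t ht]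
  rw [integral_congr hcongrA] at ibpA
  -- IBP for B
  have ibpB := ibp_indefinite h2pi gb' B B' (g (e 0)) hint hB hB'c
  rw [hint0, add_zero, show B (2 * Real.pi) = B 0 by simp only [hB_def, hper],
    sub_self, zero_sub] at ibpB
  have hcongrB : ∀ t ∈ uIcc (0:ℝ) (2 * Real.pi),
      B' t * (g (e 0) + ∫ s in (0:ℝ)..t, gb' s) = B' t * g (e t) := by
    intro t ht
    rw [uIcc_of_le h2pi] at ht
    rw [← hac t ht]
  rw [integral_congr hcongrB] at ibpB
  -- evaluate the A-side integral via the Cauchy integral formula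
  have hAval : ∫ t in (0:ℝ)..(2 * Real.pi), A' t * g (e t)
      = -(w * (2 * Real.pi * Complex.I * deriv g w)) := by
    have h1 : ∫ t in (0:ℝ)..(2 * Real.pi), A' t * g (e t)
        = -(w * (∮ z in C(0, 1), ((z - w) ^ 2)⁻¹ * g z)) := by
      rw [hrep, ← intervalIntegral.integral_const_mul, ← intervalIntegral.integral_neg]
      apply integral_congr
      intro t _
      simp only [hA'_def]
      ring
    rw [h1, cauchy_deriv g hg hgc hw]
  rw [hAval, neg_neg] at ibpA
  -- evaluate the B-side integral via Cauchy-Goursat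
  have hBval : ∫ t in (0:ℝ)..(2 * Real.pi), B' t * g (e t) = 0 := by
    have h1 : ∫ t in (0:ℝ)..(2 * Real.pi), B' t * g (e t)
        = (starRingEnd ℂ) w * (∮ z in C(0, 1), ((1 - (starRingEnd ℂ) w * z) ^ 2)⁻¹ * g z) := by
      rw [hrep, ← intervalIntegral.integral_const_mul]
      apply integral_congr
      intro t _
      simp only [hB'_def]
      ring
    rw [h1, goursat_term g hg hgc hw1, mul_zero]
  rw [hBval, neg_zero] at ibpB
  -- split the Poisson kernel
  have hsplit : ∀ t ∈ uIcc (0:ℝ) (2 * Real.pi),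
      (((1 - ‖w‖ ^ 2) / ‖e t - w‖ ^ 2 : ℝ) : ℂ) * gb' t
        = A t * gb' t + B t * gb' t - gb' t := by
    intro t _
    rw [show ((((1 - ‖w‖ ^ 2) / ‖e t - w‖ ^ 2 : ℝ)) : ℂ)
      = e t / (e t - w) + 1 / (1 - (starRingEnd ℂ) w * e t) - 1 from kernel_split hw1 t]
    simp only [hA_def, hB_def]
    ring
  have hAi : IntervalIntegrable (fun t => A t * gb' t) volume 0 (2 * Real.pi) :=
    hint.continuousOn_mul hAc.continuousOn
  have hBi : IntervalIntegrable (fun t => B t * gb' t) volume 0 (2 * Real.pi) :=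
    hint.continuousOn_mul hBc.continuousOn
  have htotal : ∫ t in (0:ℝ)..(2 * Real.pi),
      (((1 - ‖w‖ ^ 2) / ‖e t - w‖ ^ 2 : ℝ) : ℂ) * gb' t
        = 2 * Real.pi * (Complex.I * w * deriv g w) := by
    rw [integral_congr hsplit, integral_sub (hAi.add hBi) hint,
      integral_add hAi hBi, ibpA, ibpB, hint0]
    ring
  rw [htotal, Complex.real_smul]
  have hpi : ((2 * Real.pi : ℝ) : ℂ) ≠ 0 := by
    simp [Real.pi_ne_zero]
  have hπ : (Real.pi : ℂ) ≠ 0 := by exact_mod_cast Real.pi_ne_zero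
  push_cast
  field_simp
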